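/- Let D=(V,E) be a finite multidigraph, let u,v ∈ V be distinct vertices, and suppose the arc (u,v) occurs with multiplicity n and the arc (v,u) occurs with multiplicity m in E. Let D₃ be the multidigraph obtained from D by deleting all n arcs (u,v) and all m arcs (v,u), let D₁ = D₃ with one arc (u,v) added, and let D₂ = D₃ with one arc (v,u) added. Then σ(D;x) = n·σ(D₁;x) + m·σ(D₂;x) − (n+m−1)·σ(D₃;x) + n·m·x². -/

import Mathlib

open Classical

/-- A finite multidigraph: a finite set `V` of vertices (natural numbers),
a finite set `A` of arc identifiers, and a map `ends` assigning to each arc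
identifier its (source, target) pair of vertices.  Parallel arcs are distinct
identifiers with the same endpoints; loops are arcs with equal endpoints. -/
structure MDigraph where
  V : Finset ℕ
  A : Finset ℕ
  ends : ℕ → ℕ × ℕ

namespace MDigraph

/-- Every arc has both endpoints in the vertex set. -/
def WellFormed (D : MDigraph) : Prop :=
  ∀ a ∈ D.A, (D.ends a).1 ∈ D.V ∧ (D.ends a).2 ∈ D.V

/-- An arc is a loop if its source equals its target. -/
def IsLoop (D : MDigraph) (e : ℕ) : Prop := (D.ends e).1 = (D.ends e).2

/-- Arc deletion `D_{-e}`. -/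
def delArc (D : MDigraph) (e : ℕ) : MDigraph := ⟨D.V, D.A.erase e, D.ends⟩

/-- Arc contraction `D_{/e}`.  For a non-loop arc `e = (u,v)`: merge `u` and `v`
into a single vertex (named `u`), removing exactly the arcs of the form `(u,x)`
and `(y,v)`.  For a loop `e = (u,u)`: delete `u` together with all incident arcs. -/
noncomputable def contractArc (D : MDigraph) (e : ℕ) : MDigraph :=
  let u := (D.ends e).1
  let v := (D.ends e).2
  if u = v then
    ⟨D.V.erase u, D.A.filter (fun a => (D.ends a).1 ≠ u ∧ (D.ends a).2 ≠ u), D.ends⟩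
  else
    ⟨D.V.erase v, D.A.filter (fun a => (D.ends a).1 ≠ u ∧ (D.ends a).2 ≠ v),
      fun a => ((if (D.ends a).1 = v then u else (D.ends a).1),
                (if (D.ends a).2 = v then u else (D.ends a).2))⟩

/-- Arc extraction `D_{†e}`: delete both endpoints of `e` and all arcs incident to them. -/
noncomputable def extractArc (D : MDigraph) (e : ℕ) : MDigraph :=
  let u := (D.ends e).1
  let v := (D.ends e).2
  ⟨(D.V.erase u).erase v,
   D.A.filter (fun a =>
     (D.ends a).1 ≠ u ∧ (D.ends a).1 ≠ v ∧ (D.ends a).2 ≠ u ∧ (D.ends a).2 ≠ v),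
   D.ends⟩

/-- Add one new arc with endpoints `p` (using a fresh arc identifier). -/
noncomputable def addArc (D : MDigraph) (p : ℕ × ℕ) : MDigraph :=
  ⟨D.V, insert (D.A.sup id + 1) D.A, Function.update D.ends (D.A.sup id + 1) p⟩

/-- Vertex deletion `D_{-v}`. -/
noncomputable def delVertex (D : MDigraph) (v : ℕ) : MDigraph :=
  ⟨D.V.erase v, D.A.filter (fun a => (D.ends a).1 ≠ v ∧ (D.ends a).2 ≠ v), D.ends⟩

/-- Vertex contraction `D_{/v}`: delete `v`, and for every arc `(u,v)` into `v`
and every arc `(v,w)` out of `v` add a new arc `(u,w)`; thus the multiplicity of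
a new arc `(u,w)` is the multiplicity of `(u,v)` times that of `(v,w)`. -/
noncomputable def contractVertex (D : MDigraph) (v : ℕ) : MDigraph :=
  ⟨D.V.erase v,
   ((D.A.filter (fun a => (D.ends a).1 ≠ v ∧ (D.ends a).2 ≠ v)).image (fun a => 2 * a)) ∪
     (((D.A.filter (fun a => (D.ends a).2 = v)) ×ˢ (D.A.filter (fun a => (D.ends a).1 = v))).image
       (fun p => 2 * Nat.pair p.1 p.2 + 1)),
   fun n =>
     if n % 2 = 0 then D.ends (n / 2)
     else ((D.ends (Nat.unpair ((n - 1) / 2)).1).1, (D.ends (Nat.unpair ((n - 1) / 2)).2).2)⟩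

/-- The arc-less digraph on `n` vertices. -/
def emptyD (n : ℕ) : MDigraph := ⟨Finset.range n, ∅, fun _ => (0, 0)⟩

/-- Disjoint union of two multidigraphs (vertices and arcs relabelled evenly/oddly). -/
noncomputable def disjUnion (D₁ D₂ : MDigraph) : MDigraph :=
  ⟨(D₁.V.image (fun v => 2 * v)) ∪ (D₂.V.image (fun v => 2 * v + 1)),
   (D₁.A.image (fun a => 2 * a)) ∪ (D₂.A.image (fun a => 2 * a + 1)),
   fun n =>
     if n % 2 = 0 then (2 * (D₁.ends (n / 2)).1, 2 * (D₁.ends (n / 2)).2)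
     else (2 * (D₂.ends (n / 2)).1 + 1, 2 * (D₂.ends (n / 2)).2 + 1)⟩

/-- Isomorphism of multidigraphs. -/
def Iso (D₁ D₂ : MDigraph) : Prop :=
  ∃ φ ψ : ℕ → ℕ, Set.BijOn φ ↑D₁.V ↑D₂.V ∧ Set.BijOn ψ ↑D₁.A ↑D₂.A ∧
    ∀ a ∈ D₁.A, D₂.ends (ψ a) = (φ (D₁.ends a).1, φ (D₁.ends a).2)

/-- `C` is (the arc set of) a directed cycle of length `k` in `D`: `k` distinct arcs
forming a closed directed walk through `k` distinct vertices (`k ≥ 1`;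
a loop is a directed cycle of length 1). -/
def IsCycle (D : MDigraph) (C : Finset ℕ) (k : ℕ) : Prop :=
  1 ≤ k ∧ ∃ v a : ℕ → ℕ,
    (∀ i j, i < k → j < k → v i = v j → i = j) ∧
    (∀ i j, i < k → j < k → a i = a j → i = j) ∧
    (∀ i, i < k → a i ∈ D.A ∧ D.ends (a i) = (v i, v ((i + 1) % k))) ∧
    C = (Finset.range k).image a

/-- `P` is (the arc set of) a directed path of length `k` in `D`: `k` distinct arcs
forming a directed walk through `k+1` distinct vertices (`k ≥ 1`). -/
def IsPath (D : MDigraph) (P : Finset ℕ) (k : ℕ) : Prop :=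
  1 ≤ k ∧ ∃ v a : ℕ → ℕ,
    (∀ i j, i ≤ k → j ≤ k → v i = v j → i = j) ∧
    (∀ i j, i < k → j < k → a i = a j → i = j) ∧
    (∀ i, i < k → a i ∈ D.A ∧ D.ends (a i) = (v i, v (i + 1))) ∧
    P = (Finset.range k).image a

/-- Number `c_k(D)` of directed cycles of length `k`. -/
noncomputable def cycCount (D : MDigraph) (k : ℕ) : ℕ :=
  (D.A.powerset.filter (fun C => IsCycle D C k)).card

/-- Number `p_k(D)` of directed paths of length `k`. -/
noncomputable def pathCount (D : MDigraph) (k : ℕ) : ℕ :=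
  (D.A.powerset.filter (fun P => IsPath D P k)).card

/-- The cycle polynomial `σ(D;x) = ∑_k c_k(D) x^k`. -/
noncomputable def cyclePoly (D : MDigraph) : Polynomial ℝ :=
  ∑ k ∈ Finset.range (D.A.card + 1), (cycCount D k : ℝ) • Polynomial.X ^ k

/-- The path polynomial `π(D;x) = ∑_k p_k(D) x^k`. -/
noncomputable def pathPoly (D : MDigraph) : Polynomial ℝ :=
  ∑ k ∈ Finset.range (D.A.card + 1), (pathCount D k : ℝ) • Polynomial.X ^ k


/-- Out-degree of `v`: arcs with tail `v`, counted with multiplicity. -/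
noncomputable def outDeg (D : MDigraph) (v : ℕ) : ℕ :=
  (D.A.filter (fun a => (D.ends a).1 = v)).card

/-- In-degree of `v`: arcs with head `v`, counted with multiplicity. -/
noncomputable def inDeg (D : MDigraph) (v : ℕ) : ℕ :=
  (D.A.filter (fun a => (D.ends a).2 = v)).card

/-- `P` is a directed path of length `k` in `D` beginning at `v0`. -/
def IsPathFrom (D : MDigraph) (v0 : ℕ) (P : Finset ℕ) (k : ℕ) : Prop :=
  1 ≤ k ∧ ∃ v a : ℕ → ℕ, v 0 = v0 ∧
    (∀ i j, i ≤ k → j ≤ k → v i = v j → i = j) ∧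
    (∀ i j, i < k → j < k → a i = a j → i = j) ∧
    (∀ i, i < k → a i ∈ D.A ∧ D.ends (a i) = (v i, v (i + 1))) ∧
    P = (Finset.range k).image a

/-- `P` is a directed path of length `k` in `D` ending at `v0`. -/
def IsPathTo (D : MDigraph) (v0 : ℕ) (P : Finset ℕ) (k : ℕ) : Prop :=
  1 ≤ k ∧ ∃ v a : ℕ → ℕ, v k = v0 ∧
    (∀ i j, i ≤ k → j ≤ k → v i = v j → i = j) ∧
    (∀ i j, i < k → j < k → a i = a j → i = j) ∧
    (∀ i, i < k → a i ∈ D.A ∧ D.ends (a i) = (v i, v (i + 1))) ∧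
    P = (Finset.range k).image a

/-- `p_k(D,v,+)`: number of directed paths of length `k` beginning at `v`. -/
noncomputable def pathFromCount (D : MDigraph) (v : ℕ) (k : ℕ) : ℕ :=
  (D.A.powerset.filter (fun P => IsPathFrom D v P k)).card

/-- `p_k(D,v,−)`: number of directed paths of length `k` ending at `v`. -/
noncomputable def pathToCount (D : MDigraph) (v : ℕ) (k : ℕ) : ℕ :=
  (D.A.powerset.filter (fun P => IsPathTo D v P k)).card

/-- `π_{v+}(D;x) = ∑_k p_k(D,v,+) x^k`. -/
noncomputable def pathFromPoly (D : MDigraph) (v : ℕ) : Polynomial ℝ :=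
  ∑ k ∈ Finset.range (D.A.card + 1), (pathFromCount D v k : ℝ) • Polynomial.X ^ k

/-- `π_{v-}(D;x) = ∑_k p_k(D,v,−) x^k`. -/
noncomputable def pathToPoly (D : MDigraph) (v : ℕ) : Polynomial ℝ :=
  ∑ k ∈ Finset.range (D.A.card + 1), (pathToCount D v k : ℝ) • Polynomial.X ^ k

/-- In the spanning subgraph `D⟨F⟩`, every vertex has out-degree ≤ 1 and
in-degree ≤ 1; equivalently, every component of `D⟨F⟩` is a directed cycle,
a directed path, or an isolated vertex. -/
def DegOK (D : MDigraph) (F : Finset ℕ) : Prop :=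
  ∀ w : ℕ, (F.filter (fun a => (D.ends a).1 = w)).card ≤ 1 ∧
    (F.filter (fun a => (D.ends a).2 = w)).card ≤ 1

/-- `kc(D⟨F⟩)`: the number of components of the spanning subgraph `D⟨F⟩` that are
directed cycles (for degree-constrained `F`, these are exactly the directed
cycles contained in `F`). -/
noncomputable def kcF (D : MDigraph) (F : Finset ℕ) : ℕ :=
  (F.powerset.filter (fun C => ∃ k, IsCycle D C k)).card

/-- `kp(D⟨F⟩)`: the number of components of the spanning subgraph `D⟨F⟩` that are
directed paths with at least one arc (for degree-constrained `F`, counted by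
their initial vertices: vertices that are the tail of an arc of `F` but the
head of no arc of `F`). -/
noncomputable def kpF (D : MDigraph) (F : Finset ℕ) : ℕ :=
  ((F.image (fun a => (D.ends a).1)).filter
    (fun w => (F.filter (fun a => (D.ends a).2 = w)).card = 0)).card

/-- The number of vertices covered by (incident to) the arcs of `F`. -/
noncomputable def coveredCard (D : MDigraph) (F : Finset ℕ) : ℕ :=
  ((F.image (fun a => (D.ends a).1)) ∪ (F.image (fun a => (D.ends a).2))).card

/-- `k(D⟨F⟩)`: total number of connected components of the spanning subgraph
`D⟨F⟩` (isolated vertices included), for degree-constrained `F` in a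
well-formed digraph. -/
noncomputable def kF (D : MDigraph) (F : Finset ℕ) : ℕ :=
  D.V.card - coveredCard D F + kcF D F + kpF D F

/-- `c(D⟨F⟩)`: number of covered components (components with at least one arc). -/
noncomputable def cF (D : MDigraph) (F : Finset ℕ) : ℕ := kcF D F + kpF D F

/-- `c₁(D⟨F⟩)`: number of loops in `F`. -/
noncomputable def loopCount (D : MDigraph) (F : Finset ℕ) : ℕ :=
  (F.filter (fun a => (D.ends a).1 = (D.ends a).2)).card

/-- The bivariate cycle polynomial
`σ̂(D;x,y) = ∑_F x^{|F|} y^{kc(D⟨F⟩)}`, the sum being over all arc subsets `F`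
such that every component of `D⟨F⟩` is a directed cycle or an isolated vertex. -/
noncomputable def biCycPoly (D : MDigraph) : MvPolynomial (Fin 2) ℝ :=
  ∑ F ∈ D.A.powerset.filter (fun F => DegOK D F ∧ kpF D F = 0),
    MvPolynomial.X 0 ^ F.card * MvPolynomial.X 1 ^ kcF D F

/-- The bivariate path polynomial
`π̂(D;x,y) = ∑_F x^{|F|} y^{kp(D⟨F⟩)}`, the sum being over all arc subsets `F`
such that every component of `D⟨F⟩` is a directed path or an isolated vertex. -/
noncomputable def biPathPoly (D : MDigraph) : MvPolynomial (Fin 2) ℝ :=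
  ∑ F ∈ D.A.powerset.filter (fun F => DegOK D F ∧ kcF D F = 0),
    MvPolynomial.X 0 ^ F.card * MvPolynomial.X 1 ^ kpF D F

/-- The trivariate cycle-path polynomial
`σ̂π(D;x,y,z) = ∑_F x^{|F|} y^{kc(D⟨F⟩)} z^{kp(D⟨F⟩)}`, the sum being over all
arc subsets `F` in which every vertex has in- and out-degree at most 1. -/
noncomputable def triPoly (D : MDigraph) : MvPolynomial (Fin 3) ℝ :=
  ∑ F ∈ D.A.powerset.filter (fun F => DegOK D F),
    MvPolynomial.X 0 ^ F.card * MvPolynomial.X 1 ^ kcF D F * MvPolynomial.X 2 ^ kpF D F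

/-- The geometric cover polynomial `C̃(D;x,y) = ∑_{i,j} c_{i,j}(D) x^i y^j`,
where `c_{i,j}(D)` is the number of ways of disjointly covering all vertices of
`D` with `i` directed paths and `j` directed cycles (isolated vertices counting
as paths of length 0): a cover is an arc subset `F` with all in- and out-degrees
at most 1, contributing `j = kc(D⟨F⟩)` cycles and
`i = kp(D⟨F⟩) + (number of uncovered vertices)` paths. -/
noncomputable def geomCover (D : MDigraph) (x y : ℝ) : ℝ :=
  ∑ F ∈ D.A.powerset.filter (fun F => DegOK D F),
    x ^ (kpF D F + (D.V.card - coveredCard D F)) * y ^ kcF D F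

/-- No vertex is incident both to an arc of `A` and to an arc of `B`. -/
def NoCommonVertex (D : MDigraph) (A B : Finset ℕ) : Prop :=
  ∀ a ∈ A, ∀ b ∈ B,
    (D.ends a).1 ≠ (D.ends b).1 ∧ (D.ends a).1 ≠ (D.ends b).2 ∧
    (D.ends a).2 ≠ (D.ends b).1 ∧ (D.ends a).2 ≠ (D.ends b).2

/-- The explicit polynomial
`N(D;x,y,z) = ∑_{(A,B)} x^{k(D⟨A∪B⟩)−c(D⟨B⟩)−c₁(D⟨A⟩)} y^{|A|+|B|−c(D⟨B⟩)} z^{c(D⟨B⟩)}`,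
summing over pairs of disjoint arc subsets `A, B` sharing no vertex such that
every component of `D⟨A∪B⟩` is a directed cycle, a directed path or an isolated
vertex. -/
noncomputable def NPoly (D : MDigraph) : MvPolynomial (Fin 3) ℝ :=
  ∑ p ∈ (D.A.powerset ×ˢ D.A.powerset).filter
      (fun p => Disjoint p.1 p.2 ∧ NoCommonVertex D p.1 p.2 ∧ DegOK D (p.1 ∪ p.2)),
    MvPolynomial.X 0 ^ (kF D (p.1 ∪ p.2) - cF D p.2 - loopCount D p.1) *
      MvPolynomial.X 1 ^ (p.1.card + p.2.card - cF D p.2) *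
      MvPolynomial.X 2 ^ cF D p.2

end MDigraph

/-- A finite undirected graph: a finite vertex set and a finite set of
unordered pairs as edges. -/
structure SGraph where
  V : Finset ℕ
  E : Finset (Sym2 ℕ)

namespace SGraph

/-- `G` is a simple graph: no loops, and all edge endpoints are vertices. -/
def Simple (G : SGraph) : Prop :=
  (∀ s ∈ G.E, ¬ s.IsDiag) ∧ ∀ s ∈ G.E, ∀ a ∈ s, a ∈ G.V

/-- `P` is (the edge set of) an undirected path of length `k` in `G`. -/
def IsUPath (G : SGraph) (P : Finset (Sym2 ℕ)) (k : ℕ) : Prop :=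
  1 ≤ k ∧ ∃ v : ℕ → ℕ,
    (∀ i j, i ≤ k → j ≤ k → v i = v j → i = j) ∧
    (∀ i, i < k → s(v i, v (i + 1)) ∈ G.E) ∧
    P = (Finset.range k).image (fun i => s(v i, v (i + 1)))

/-- `C` is (the edge set of) an undirected cycle of length `k ≥ 3` in `G`. -/
def IsUCycle (G : SGraph) (C : Finset (Sym2 ℕ)) (k : ℕ) : Prop :=
  3 ≤ k ∧ ∃ v : ℕ → ℕ,
    (∀ i j, i < k → j < k → v i = v j → i = j) ∧
    (∀ i, i < k → s(v i, v ((i + 1) % k)) ∈ G.E) ∧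
    C = (Finset.range k).image (fun i => s(v i, v ((i + 1) % k)))

/-- `p_k(G)`: number of undirected paths of length `k` in `G`. -/
noncomputable def uPathCount (G : SGraph) (k : ℕ) : ℕ :=
  (G.E.powerset.filter (fun P => IsUPath G P k)).card

/-- `c_k(G)`: number of undirected cycles of length `k` in `G`. -/
noncomputable def uCycCount (G : SGraph) (k : ℕ) : ℕ :=
  (G.E.powerset.filter (fun C => IsUCycle G C k)).card

/-- `π(G;x) = ∑_k p_k(G) x^k`. -/
noncomputable def uPathPoly (G : SGraph) : Polynomial ℝ :=
  ∑ k ∈ Finset.range (G.E.card + 1), (uPathCount G k : ℝ) • Polynomial.X ^ k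

/-- `σ(G;x) = ∑_k c_k(G) x^k`. -/
noncomputable def uCycPoly (G : SGraph) : Polynomial ℝ :=
  ∑ k ∈ Finset.range (G.E.card + 1), (uCycCount G k : ℝ) • Polynomial.X ^ k

/-- The digraph `D(G)` obtained from `G` by replacing each edge `{u,v}` by the
two oppositely oriented arcs `(u,v)` and `(v,u)`. -/
noncomputable def toDigraph (G : SGraph) : MDigraph :=
  ⟨G.V, ((G.V ×ˢ G.V).filter (fun p => s(p.1, p.2) ∈ G.E)).image (fun p => Nat.pair p.1 p.2),
   Nat.unpair⟩

end SGraph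

namespace MDigraph

-- ==== aux lemmas ====

lemma isCycle_card {D : MDigraph} {C : Finset ℕ} {k : ℕ} (h : IsCycle D C k) : C.card = k := by
  obtain ⟨hk, v, a, hv, ha, harc, hC⟩ := h
  rw [hC, Finset.card_image_of_injOn, Finset.card_range]
  intro i hi j hj hij
  exact ha i j (Finset.mem_range.1 hi) (Finset.mem_range.1 hj) hij

lemma isCycle_mem {D : MDigraph} {C : Finset ℕ} {k : ℕ} (h : IsCycle D C k) {b : ℕ}
    (hb : b ∈ C) : b ∈ D.A := by
  obtain ⟨hk, v, a, hv, ha, harc, hC⟩ := h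
  obtain ⟨i, hi, rfl⟩ := Finset.mem_image.1 (hC ▸ hb)
  exact (harc i (Finset.mem_range.1 hi)).1

lemma cycle_tail_unique {D : MDigraph} {C : Finset ℕ} {k b c : ℕ}
    (hC : IsCycle D C k) (hb : b ∈ C) (hc : c ∈ C)
    (h : (D.ends b).1 = (D.ends c).1) : b = c := by
  obtain ⟨hk, w, a, hw, ha, harc, hCeq⟩ := hC
  obtain ⟨i, hi, rfl⟩ := Finset.mem_image.1 (hCeq ▸ hb)
  obtain ⟨j, hj, rfl⟩ := Finset.mem_image.1 (hCeq ▸ hc)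
  rw [Finset.mem_range] at hi hj
  rw [(harc i hi).2, (harc j hj).2] at h
  exact congrArg a (hw i j hi hj h)

lemma cycle_transfer {D D' : MDigraph} {C : Finset ℕ} {k e f : ℕ}
    (hC : IsCycle D C k) (he : e ∈ C) (hf : f ∈ D'.A)
    (hfe : D'.ends f = D.ends e)
    (hother : ∀ b ∈ C.erase e, b ∈ D'.A ∧ D'.ends b = D.ends b)
    (hfC : f ∉ C.erase e) :
    IsCycle D' (insert f (C.erase e)) k := by
  obtain ⟨hk, v, a, hv, ha, harc, hCeq⟩ := hC
  obtain ⟨i0, hi0r, hai0⟩ := Finset.mem_image.1 (hCeq ▸ he)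
  rw [Finset.mem_range] at hi0r
  have hmem : ∀ i, i < k → i ≠ i0 → a i ∈ C.erase e := by
    intro i hik hne
    refine Finset.mem_erase.2 ⟨fun hje => hne (ha i i0 hik hi0r (hje.trans hai0.symm)), ?_⟩
    rw [hCeq]; exact Finset.mem_image_of_mem a (Finset.mem_range.2 hik)
  refine ⟨hk, v, fun i => if i = i0 then f else a i, hv, ?_, ?_, ?_⟩
  · intro i j hik hjk hij
    dsimp only at hij
    by_cases h1 : i = i0 <;> by_cases h2 : j = i0
    · omega
    · exfalso; rw [if_pos h1, if_neg h2] at hij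
      exact hfC (hij ▸ hmem j hjk h2)
    · exfalso; rw [if_neg h1, if_pos h2] at hij
      exact hfC (hij ▸ hmem i hik h1)
    · rw [if_neg h1, if_neg h2] at hij
      exact ha i j hik hjk hij
  · intro i hik
    dsimp only
    by_cases h1 : i = i0
    · subst h1
      rw [if_pos rfl, hfe, ← hai0]
      exact ⟨hf, (harc i hi0r).2⟩
    · have hm := hmem i hik h1
      rw [if_neg h1, (hother _ hm).2]
      exact ⟨(hother _ hm).1, (harc i hik).2⟩
  · ext x
    simp only [Finset.mem_insert, Finset.mem_erase, Finset.mem_image, Finset.mem_range, hCeq]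
    constructor
    · rintro (rfl | ⟨hxe, i, hik, rfl⟩)
      · exact ⟨i0, hi0r, if_pos rfl⟩
      · refine ⟨i, hik, ?_⟩
        rw [if_neg]
        intro h; exact hxe (h ▸ hai0 ▸ rfl)
    · rintro ⟨i, hik, rfl⟩
      by_cases h1 : i = i0
      · left; rw [if_pos h1]
      · right; rw [if_neg h1]
        have := hmem i hik h1
        rw [Finset.mem_erase, hCeq] at this
        refine ⟨this.1, i, hik, rfl⟩

lemma cycle_congr {D D' : MDigraph} {C : Finset ℕ} {k : ℕ}
    (hC : IsCycle D C k) (h : ∀ b ∈ C, b ∈ D'.A ∧ D'.ends b = D.ends b) :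
    IsCycle D' C k := by
  have hcard := isCycle_card hC
  have hne : C.Nonempty := by rw [← Finset.card_pos, hcard]; exact hC.1
  obtain ⟨e, he⟩ := hne
  have := cycle_transfer hC he (h e he).1 (h e he).2
    (fun b hb => h b (Finset.mem_of_mem_erase hb)) (Finset.notMem_erase e C)
  rwa [Finset.insert_erase he] at this


lemma cycle_two_arcs {D : MDigraph} {C : Finset ℕ} {k u v e g : ℕ}
    (hC : IsCycle D C k) (huv : u ≠ v) (he : e ∈ C) (hg : g ∈ C)
    (hee : D.ends e = (u, v)) (hge : D.ends g = (v, u)) :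
    k = 2 ∧ C = {e, g} := by
  obtain ⟨hk, w, a, hw, ha, harc, hCeq⟩ := hC
  obtain ⟨i, hi, hai⟩ := Finset.mem_image.1 (hCeq ▸ he)
  obtain ⟨j, hj, haj⟩ := Finset.mem_image.1 (hCeq ▸ hg)
  rw [Finset.mem_range] at hi hj
  have h1 := (harc i hi).2
  have h2 := (harc j hj).2
  rw [hai, hee] at h1
  rw [haj, hge] at h2
  have hwi : w i = u := (Prod.mk.injEq _ _ _ _ ▸ h1).1.symm
  have hwi1 : w ((i+1)%k) = v := (Prod.mk.injEq _ _ _ _ ▸ h1).2.symm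
  have hwj : w j = v := (Prod.mk.injEq _ _ _ _ ▸ h2).1.symm
  have hwj1 : w ((j+1)%k) = u := (Prod.mk.injEq _ _ _ _ ▸ h2).2.symm
  have hkpos : 0 < k := hk
  have hji : j = (i+1) % k := hw j ((i+1)%k) hj (Nat.mod_lt _ hkpos) (hwj.trans hwi1.symm)
  have hij : i = (j+1) % k := hw i ((j+1)%k) hi (Nat.mod_lt _ hkpos) (hwi.trans hwj1.symm)
  have hk2 : k = 2 := by
    rcases Nat.lt_or_ge k 2 with h | h
    · exfalso
      have hk1 : k = 1 := by omega
      subst hk1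
      have hi0 : i = 0 := by omega
      have hj0 : j = 0 := by omega
      have heg : e = g := by rw [← hai, ← haj, hi0, hj0]
      apply huv
      rw [heg, hge] at hee
      exact ((Prod.mk.injEq _ _ _ _ ▸ hee).1).symm
    · have h3 : ((i + 1) % k + 1) % k = i := by rw [← hji]; exact hij.symm
      rw [Nat.mod_add_mod] at h3
      rcases Nat.lt_or_ge (i+1+1) k with h4 | h4
      · rw [Nat.mod_eq_of_lt h4] at h3; omega
      · have h5 : (i+1+1) % k = i + 1 + 1 - k := by
          rw [Nat.mod_eq_sub_mod h4, Nat.mod_eq_of_lt (by omega)]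
        omega
  subst hk2
  refine ⟨rfl, ?_⟩
  have hij' : i ≠ j := by omega
  have hr2 : Finset.range 2 = {0, 1} := rfl
  have : ({i, j} : Finset ℕ) = {0, 1} := by
    interval_cases i <;> interval_cases j
    · exact absurd rfl hij'
    · rfl
    · exact Finset.pair_comm 1 0
    · exact absurd rfl hij'
  rw [hCeq, hr2, ← this]
  rw [Finset.image_insert, Finset.image_singleton, hai, haj]

lemma isCycle_pair {D : MDigraph} {u v e g : ℕ} (huv : u ≠ v) (heg : e ≠ g)
    (heA : e ∈ D.A) (hgA : g ∈ D.A) (hee : D.ends e = (u,v)) (hge : D.ends g = (v,u)) :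
    IsCycle D {e, g} 2 := by
  refine ⟨by norm_num, fun i => if i = 0 then u else v, fun i => if i = 0 then e else g,
    ?_, ?_, ?_, ?_⟩
  · intro i j hi hj hij
    dsimp only at hij
    interval_cases i <;> interval_cases j <;> simp_all
  · intro i j hi hj hij
    dsimp only at hij
    interval_cases i <;> interval_cases j <;> simp_all
  · intro i hi
    dsimp only
    interval_cases i
    · simpa [hee] using heA
    · simpa [hge] using hgA
  · have hr2 : Finset.range 2 = {0, 1} := rfl
    rw [hr2, Finset.image_insert, Finset.image_singleton]
    norm_num


lemma sup_succ_not_mem (s : Finset ℕ) : s.sup id + 1 ∉ s := by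
  intro h
  have := Finset.le_sup (f := id) h
  simp only [id] at this
  omega

lemma cycCount_eq_zero {D : MDigraph} {k : ℕ} (h : D.A.card < k) : cycCount D k = 0 := by
  rw [cycCount, Finset.card_eq_zero, Finset.filter_eq_empty_iff]
  rintro C hC hcyc
  have h1 := isCycle_card hcyc
  have h2 := Finset.card_le_card (Finset.mem_powerset.1 hC)
  omega

lemma cyclePoly_eq_sum (D : MDigraph) {N : ℕ} (hN : D.A.card ≤ N) :
    D.cyclePoly = ∑ k ∈ Finset.range (N + 1), (cycCount D k : ℝ) • Polynomial.X ^ k := by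
  rw [cyclePoly]
  apply Finset.sum_subset
  · exact Finset.range_subset_range.2 (by omega)
  · intro k hk hk'
    rw [Finset.mem_range] at hk
    rw [Finset.mem_range] at hk'
    rw [cycCount_eq_zero (by omega)]
    simp

lemma addArc_cycCount (D₃ : MDigraph) (p : ℕ × ℕ) (k : ℕ) :
    cycCount (D₃.addArc p) k = cycCount D₃ k +
      ((D₃.addArc p).A.powerset.filter
        (fun C => IsCycle (D₃.addArc p) C k ∧ (D₃.A.sup id + 1) ∈ C)).card := by
  set g := D₃.A.sup id + 1 with hg
  have hgA : g ∉ D₃.A := sup_succ_not_mem _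
  have hends : ∀ b, b ≠ g → (D₃.addArc p).ends b = D₃.ends b := by
    intro b hb
    exact Function.update_of_ne hb _ _
  rw [cycCount]
  rw [← Finset.card_filter_add_card_filter_not
    (p := fun C => (D₃.A.sup id + 1) ∈ C)]
  rw [Nat.add_comm, Finset.filter_filter, Finset.filter_filter]
  congr 1
  · -- cycles avoiding g are cycles of D₃
    rw [cycCount]
    congr 1
    ext C
    simp only [Finset.mem_filter, Finset.mem_powerset]
    constructor
    · rintro ⟨hsub, hcyc, hgC⟩
      have hsub' : C ⊆ D₃.A := by
        intro x hx
        rcases Finset.mem_insert.1 (hsub hx) with h | h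
        · exact absurd (h ▸ hx) hgC
        · exact h
      refine ⟨hsub', cycle_congr hcyc fun b hb => ⟨hsub' hb, (hends b ?_).symm⟩⟩
      intro hbg; exact hgC (by rwa [hbg] at hb)
    · rintro ⟨hsub, hcyc⟩
      have hgC : g ∉ C := fun h => hgA (hsub h)
      refine ⟨fun x hx => Finset.mem_insert_of_mem (hsub hx),
        cycle_congr hcyc fun b hb => ⟨Finset.mem_insert_of_mem (hsub hb), hends b ?_⟩, hgC⟩
      intro hbg; exact hgC (by rwa [hbg] at hb)


lemma count_no_dir (D D₃ : MDigraph) (u v : ℕ)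
    (hA : ∀ a, a ∈ D₃.A ↔ a ∈ D.A ∧ D.ends a ≠ (u,v) ∧ D.ends a ≠ (v,u))
    (hends : ∀ a, D₃.ends a = D.ends a) (k : ℕ) :
    (D.A.powerset.filter (fun C => IsCycle D C k ∧
        (C.filter (fun a => D.ends a = (u,v))) = ∅ ∧
        (C.filter (fun a => D.ends a = (v,u))) = ∅)).card = cycCount D₃ k := by
  rw [cycCount]
  congr 1
  ext C
  simp only [Finset.mem_filter, Finset.mem_powerset, Finset.filter_eq_empty_iff]
  constructor
  · rintro ⟨hsub, hcyc, h1, h2⟩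
    have hsub' : C ⊆ D₃.A := fun x hx => (hA x).2 ⟨hsub hx, h1 hx, h2 hx⟩
    exact ⟨hsub', cycle_congr hcyc fun b hb => ⟨hsub' hb, hends b⟩⟩
  · rintro ⟨hsub, hcyc⟩
    have h3 : ∀ x ∈ C, x ∈ D.A ∧ D.ends x ≠ (u,v) ∧ D.ends x ≠ (v,u) :=
      fun x hx => (hA x).1 (hsub hx)
    exact ⟨fun x hx => (h3 x hx).1,
      cycle_congr hcyc fun b hb => ⟨(h3 b hb).1, (hends b).symm⟩,
      fun x hx => (h3 x hx).2.1, fun x hx => (h3 x hx).2.2⟩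

lemma count_both_dir (D : MDigraph) (u v : ℕ) (huv : u ≠ v) (k : ℕ) :
    (D.A.powerset.filter (fun C => IsCycle D C k ∧
        (C.filter (fun a => D.ends a = (u,v))).Nonempty ∧
        (C.filter (fun a => D.ends a = (v,u))).Nonempty)).card
      = if k = 2 then (D.A.filter (fun a => D.ends a = (u,v))).card *
          (D.A.filter (fun a => D.ends a = (v,u))).card else 0 := by
  have huv' : ((u,v) : ℕ × ℕ) ≠ (v,u) := by
    intro h; exact huv (Prod.mk.injEq _ _ _ _ ▸ h).1
  split_ifs with hk2
  · subst hk2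
    rw [← Finset.card_product]
    symm
    apply Finset.card_bij (fun p _ => ({p.1, p.2} : Finset ℕ))
    · rintro ⟨e, g⟩ hp
      simp only [Finset.mem_product, Finset.mem_filter] at hp
      obtain ⟨⟨heA, hee⟩, hgA, hge⟩ := hp
      have heg : e ≠ g := fun h => huv' (by rw [← hee, h, hge])
      simp only [Finset.mem_filter, Finset.mem_powerset]
      refine ⟨?_, isCycle_pair huv heg heA hgA hee hge, ⟨e, ?_⟩, ⟨g, ?_⟩⟩
      · intro x hx
        rcases Finset.mem_insert.1 hx with h | h
        · exact h ▸ heA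
        · exact (Finset.mem_singleton.1 h) ▸ hgA
      · simp [hee]
      · simp [hge]
    · rintro ⟨e₁, g₁⟩ hp₁ ⟨e₂, g₂⟩ hp₂ h
      simp only [Finset.mem_product, Finset.mem_filter] at hp₁ hp₂
      obtain ⟨⟨he₁A, he₁⟩, hg₁A, hg₁⟩ := hp₁
      obtain ⟨⟨he₂A, he₂⟩, hg₂A, hg₂⟩ := hp₂
      have he : e₁ = e₂ := by
        have : e₂ ∈ ({e₁, g₁} : Finset ℕ) := h ▸ Finset.mem_insert_self _ _
        rcases Finset.mem_insert.1 this with h' | h'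
        · exact h'.symm
        · exact absurd (by rw [← he₂, Finset.mem_singleton.1 h', hg₁]) huv'
      have hgg : g₁ = g₂ := by
        have : g₂ ∈ ({e₁, g₁} : Finset ℕ) := h ▸ Finset.mem_insert_of_mem (Finset.mem_singleton_self _)
        rcases Finset.mem_insert.1 this with h' | h'
        · exact absurd (by rw [← hg₂, h', he₁]) (Ne.symm huv')
        · exact (Finset.mem_singleton.1 h').symm
      rw [Prod.mk.injEq]; exact ⟨he, hgg⟩
    · intro C hC
      simp only [Finset.mem_filter, Finset.mem_powerset] at hC
      obtain ⟨hsub, hcyc, ⟨e, he⟩, ⟨g, hg⟩⟩ := hC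
      rw [Finset.mem_filter] at he hg
      obtain ⟨heC, hee⟩ := he
      obtain ⟨hgC, hge⟩ := hg
      have h2 := cycle_two_arcs hcyc huv heC hgC hee hge
      refine ⟨(e, g), ?_, h2.2.symm⟩
      simp only [Finset.mem_product, Finset.mem_filter]
      exact ⟨⟨hsub heC, hee⟩, hsub hgC, hge⟩
  · rw [Finset.card_eq_zero, Finset.filter_eq_empty_iff]
    rintro C hC ⟨hcyc, ⟨e, he⟩, ⟨g, hg⟩⟩
    rw [Finset.mem_filter] at he hg
    exact hk2 (cycle_two_arcs hcyc huv he.1 hg.1 he.2 hg.2).1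


lemma count_one_dir (D D₃ : MDigraph) (u v : ℕ) (huv : u ≠ v)
    (hA : ∀ a, a ∈ D₃.A ↔ a ∈ D.A ∧ D.ends a ≠ (u,v) ∧ D.ends a ≠ (v,u))
    (hends : ∀ a, D₃.ends a = D.ends a) (k : ℕ) :
    (D.A.powerset.filter (fun C => IsCycle D C k ∧
        (C.filter (fun a => D.ends a = (u,v))).Nonempty ∧
        (C.filter (fun a => D.ends a = (v,u))) = ∅)).card
      = (D.A.filter (fun a => D.ends a = (u,v))).card *
        ((D₃.addArc (u,v)).A.powerset.filter
          (fun C => IsCycle (D₃.addArc (u,v)) C k ∧ (D₃.A.sup id + 1) ∈ C)).card := by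
  have huv' : ((u,v) : ℕ × ℕ) ≠ (v,u) := by
    intro h; exact huv (Prod.mk.injEq _ _ _ _ ▸ h).1
  set g := D₃.A.sup id + 1 with hgdef
  set D₁ := D₃.addArc (u,v) with hD₁def
  have hgA3 : g ∉ D₃.A := sup_succ_not_mem _
  have hD₁A : D₁.A = insert g D₃.A := rfl
  have hD₁g : D₁.ends g = (u,v) := Function.update_self _ _ _
  have hD₁e : ∀ b, b ≠ g → D₁.ends b = D.ends b := by
    intro b hb
    show Function.update D₃.ends g (u,v) b = _
    rw [Function.update_of_ne hb, hends]
  have hmaps : ∀ p : ℕ × Finset ℕ,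
      p ∈ (D.A.filter (fun a => D.ends a = (u,v))) ×ˢ
        (D₁.A.powerset.filter (fun C => IsCycle D₁ C k ∧ g ∈ C)) →
      insert p.1 (p.2.erase g) ∈ D.A.powerset.filter (fun C => IsCycle D C k ∧
        (C.filter (fun a => D.ends a = (u,v))).Nonempty ∧
        (C.filter (fun a => D.ends a = (v,u))) = ∅) := by
    rintro ⟨e, C'⟩ hp
    simp only [Finset.mem_product, Finset.mem_filter, Finset.mem_powerset] at hp
    obtain ⟨⟨heA, hee⟩, hsub', hcyc', hgC'⟩ := hp
    have he3 : e ∉ D₃.A := fun h => ((hA e).1 h).2.1 hee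
    have herase_sub : C'.erase g ⊆ D₃.A := by
      intro x hx
      obtain ⟨hxg, hxC⟩ := Finset.mem_erase.1 hx
      rcases Finset.mem_insert.1 (hD₁A ▸ hsub' hxC) with h | h
      · exact absurd h hxg
      · exact h
    have henotin : e ∉ C'.erase g := fun h => he3 (herase_sub h)
    have hcyc : IsCycle D (insert e (C'.erase g)) k := by
      apply cycle_transfer hcyc' hgC' heA (by rw [hee, hD₁g]) ?_ henotin
      intro b hb
      have hb3 := herase_sub hb
      exact ⟨((hA b).1 hb3).1, (hD₁e b (fun h => hgA3 (h ▸ hb3))).symm⟩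
    simp only [Finset.mem_filter, Finset.mem_powerset]
    refine ⟨?_, hcyc, ⟨e, ?_⟩, ?_⟩
    · intro x hx
      rcases Finset.mem_insert.1 hx with h | h
      · exact h ▸ heA
      · exact ((hA x).1 (herase_sub h)).1
    · simp only [Finset.mem_filter]
      exact ⟨Finset.mem_insert_self _ _, hee⟩
    · rw [Finset.filter_eq_empty_iff]
      intro x hx
      rcases Finset.mem_insert.1 hx with h | h
      · rw [h, hee]; exact huv'
      · exact ((hA x).1 (herase_sub h)).2.2
  rw [← Finset.card_product]
  symm
  apply Finset.card_bij (fun p _ => insert p.1 (p.2.erase g)) hmaps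
  · rintro ⟨e₁, C₁⟩ hp₁ ⟨e₂, C₂⟩ hp₂ heq
    dsimp only at heq
    have hm₁ := hmaps _ hp₁
    simp only [Finset.mem_filter, Finset.mem_powerset] at hm₁
    simp only [Finset.mem_product, Finset.mem_filter, Finset.mem_powerset] at hp₁ hp₂
    obtain ⟨⟨he₁A, he₁⟩, hsub₁, hcyc₁, hg₁⟩ := hp₁
    obtain ⟨⟨he₂A, he₂⟩, hsub₂, hcyc₂, hg₂⟩ := hp₂
    have herase₁ : C₁.erase g ⊆ D₃.A := by
      intro x hx
      obtain ⟨hxg, hxC⟩ := Finset.mem_erase.1 hx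
      rcases Finset.mem_insert.1 (hD₁A ▸ hsub₁ hxC) with h | h
      · exact absurd h hxg
      · exact h
    have herase₂ : C₂.erase g ⊆ D₃.A := by
      intro x hx
      obtain ⟨hxg, hxC⟩ := Finset.mem_erase.1 hx
      rcases Finset.mem_insert.1 (hD₁A ▸ hsub₂ hxC) with h | h
      · exact absurd h hxg
      · exact h
    have he₁m : e₁ ∈ insert e₁ (C₁.erase g) := Finset.mem_insert_self _ _
    have he₂m : e₂ ∈ insert e₁ (C₁.erase g) := by
      rw [heq]; exact Finset.mem_insert_self _ _
    have hee : e₁ = e₂ :=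
      cycle_tail_unique hm₁.2.1 he₁m he₂m (by rw [he₁, he₂])
    subst hee
    have hne₁ : e₁ ∉ C₁.erase g := fun h => ((hA e₁).1 (herase₁ h)).2.1 he₁
    have hne₂ : e₁ ∉ C₂.erase g := fun h => ((hA e₁).1 (herase₂ h)).2.1 he₁
    have herase_eq : C₁.erase g = C₂.erase g := by
      rw [← Finset.erase_insert hne₁, ← Finset.erase_insert hne₂, heq]
    have : C₁ = C₂ := by
      rw [← Finset.insert_erase hg₁, ← Finset.insert_erase hg₂, herase_eq]
    rw [this]
  · intro C hC
    simp only [Finset.mem_filter, Finset.mem_powerset] at hC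
    obtain ⟨hsub, hcyc, ⟨e, he⟩, hT⟩ := hC
    rw [Finset.mem_filter] at he
    obtain ⟨heC, hee⟩ := he
    rw [Finset.filter_eq_empty_iff] at hT
    have herase3 : C.erase e ⊆ D₃.A := by
      intro x hx
      obtain ⟨hxe, hxC⟩ := Finset.mem_erase.1 hx
      refine (hA x).2 ⟨hsub hxC, ?_, hT hxC⟩
      intro hxuv
      exact hxe (cycle_tail_unique hcyc hxC heC (by rw [hxuv, hee]))
    have hgnot : g ∉ C.erase e := fun h => hgA3 (herase3 h)
    have hcyc' : IsCycle D₁ (insert g (C.erase e)) k := by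
      apply cycle_transfer hcyc heC (by rw [hD₁A]; exact Finset.mem_insert_self _ _)
        (by rw [hD₁g, hee]) ?_ hgnot
      intro b hb
      have hb3 := herase3 hb
      refine ⟨by rw [hD₁A]; exact Finset.mem_insert_of_mem hb3,
        hD₁e b (fun h => hgA3 (h ▸ hb3))⟩
    refine ⟨(e, insert g (C.erase e)), ?_, ?_⟩
    · simp only [Finset.mem_product, Finset.mem_filter, Finset.mem_powerset]
      refine ⟨⟨hsub heC, hee⟩, ?_, hcyc', Finset.mem_insert_self _ _⟩
      intro x hx
      rcases Finset.mem_insert.1 hx with h | h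
      · rw [h, hD₁A]; exact Finset.mem_insert_self _ _
      · rw [hD₁A]; exact Finset.mem_insert_of_mem (herase3 h)
    · dsimp only
      rw [Finset.erase_insert hgnot, Finset.insert_erase heC]


lemma card_split4 {α : Type*} (s : Finset α) (r p q : α → Prop)
    [DecidablePred r] [DecidablePred p] [DecidablePred q] :
    (s.filter r).card = (s.filter fun x => r x ∧ ¬p x ∧ ¬q x).card
      + (s.filter fun x => r x ∧ p x ∧ ¬q x).card
      + (s.filter fun x => r x ∧ q x ∧ ¬p x).card
      + (s.filter fun x => r x ∧ p x ∧ q x).card := by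
  rw [Finset.card_filter, Finset.card_filter, Finset.card_filter, Finset.card_filter,
    Finset.card_filter, ← Finset.sum_add_distrib, ← Finset.sum_add_distrib,
    ← Finset.sum_add_distrib]
  apply Finset.sum_congr rfl
  intro x _
  by_cases hr : r x <;> by_cases hp : p x <;> by_cases hq : q x <;> simp [hr, hp, hq]

end MDigraph

/-- if the arc `(u,v)` has multiplicity `n` and the arc `(v,u)` has
multiplicity `m` in `D` (`u ≠ v`), `D₃` is `D` with all these arcs deleted,
`D₁ = D₃ + (u,v)` and `D₂ = D₃ + (v,u)`, then
`σ(D;x) = n·σ(D₁;x) + m·σ(D₂;x) − (n+m−1)·σ(D₃;x) + n·m·x²`. -/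
theorem cyclePoly_parallel_reduction (D : MDigraph) (hwf : D.WellFormed)
    (u v : ℕ) (hu : u ∈ D.V) (hv : v ∈ D.V) (huv : u ≠ v) (n m : ℕ)
    (hn : (D.A.filter (fun a => D.ends a = (u, v))).card = n)
    (hm : (D.A.filter (fun a => D.ends a = (v, u))).card = m)
    (D₃ : MDigraph)
    (hD₃ : D₃ = ⟨D.V, D.A.filter (fun a => D.ends a ≠ (u, v) ∧ D.ends a ≠ (v, u)), D.ends⟩) :
    D.cyclePoly = (n : ℝ) • (D₃.addArc (u, v)).cyclePoly + (m : ℝ) • (D₃.addArc (v, u)).cyclePoly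
      - ((n : ℝ) + (m : ℝ) - 1) • D₃.cyclePoly + ((n * m : ℕ) : ℝ) • Polynomial.X ^ 2 := by
  have hA : ∀ a, a ∈ D₃.A ↔ a ∈ D.A ∧ D.ends a ≠ (u,v) ∧ D.ends a ≠ (v,u) := by
    intro a; rw [hD₃]; exact Finset.mem_filter
  have hA' : ∀ a, a ∈ D₃.A ↔ a ∈ D.A ∧ D.ends a ≠ (v,u) ∧ D.ends a ≠ (u,v) := by
    intro a; rw [hA]; tauto
  have hends : ∀ a, D₃.ends a = D.ends a := by intro a; rw [hD₃]
  have key : ∀ k, (MDigraph.cycCount D k : ℝ) =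
      (n : ℝ) * (MDigraph.cycCount (D₃.addArc (u, v)) k : ℝ)
        + (m : ℝ) * (MDigraph.cycCount (D₃.addArc (v, u)) k : ℝ)
        - ((n : ℝ) + (m : ℝ) - 1) * (MDigraph.cycCount D₃ k : ℝ)
        + (if k = 2 then ((n * m : ℕ) : ℝ) else 0) := by
    intro k
    have hc0 := MDigraph.count_no_dir D D₃ u v hA hends k
    have hc1 := MDigraph.count_one_dir D D₃ u v huv hA hends k
    have hc2 := MDigraph.count_one_dir D D₃ v u (Ne.symm huv) hA' hends k
    have hcb := MDigraph.count_both_dir D u v huv k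
    have e2 := MDigraph.addArc_cycCount D₃ (u, v) k
    have e3 := MDigraph.addArc_cycCount D₃ (v, u) k
    have hpart := MDigraph.card_split4 D.A.powerset
      (fun C => MDigraph.IsCycle D C k)
      (fun C => (C.filter (fun a => D.ends a = (u,v))).Nonempty)
      (fun C => (C.filter (fun a => D.ends a = (v,u))).Nonempty)
    simp only [Finset.not_nonempty_iff_eq_empty] at hpart
    beta_reduce at hpart
    rw [hc0, hc1, hc2, hcb, hn, hm] at hpart
    have e1 : MDigraph.cycCount D k =
        MDigraph.cycCount D₃ k
          + n * ((D₃.addArc (u,v)).A.powerset.filter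
              (fun C => MDigraph.IsCycle (D₃.addArc (u,v)) C k ∧ (D₃.A.sup id + 1) ∈ C)).card
          + m * ((D₃.addArc (v,u)).A.powerset.filter
              (fun C => MDigraph.IsCycle (D₃.addArc (v,u)) C k ∧ (D₃.A.sup id + 1) ∈ C)).card
          + (if k = 2 then n * m else 0) := by
      rw [MDigraph.cycCount, hpart]
      try split_ifs <;> ring
    rw [e1, e2, e3]
    split_ifs <;> push_cast <;> ring
  set N := D.A.card + (D₃.addArc (u, v)).A.card + (D₃.addArc (v, u)).A.card
    + D₃.A.card + 2 with hN
  rw [MDigraph.cyclePoly_eq_sum D (show D.A.card ≤ N by omega),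
    MDigraph.cyclePoly_eq_sum (D₃.addArc (u, v)) (show (D₃.addArc (u, v)).A.card ≤ N by omega),
    MDigraph.cyclePoly_eq_sum (D₃.addArc (v, u)) (show (D₃.addArc (v, u)).A.card ≤ N by omega),
    MDigraph.cyclePoly_eq_sum D₃ (show D₃.A.card ≤ N by omega)]
  have hX2 : ((n * m : ℕ) : ℝ) • (Polynomial.X ^ 2 : Polynomial ℝ) =
      ∑ k ∈ Finset.range (N + 1),
        (if k = 2 then ((n * m : ℕ) : ℝ) else 0) • Polynomial.X ^ k := by
    rw [Finset.sum_eq_single 2]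
    · rw [if_pos rfl]
    · intro b _ hb; rw [if_neg hb, zero_smul]
    · intro h; exact absurd (Finset.mem_range.2 (by omega)) h
  rw [hX2, Finset.smul_sum, Finset.smul_sum, Finset.smul_sum,
    ← Finset.sum_add_distrib, ← Finset.sum_sub_distrib, ← Finset.sum_add_distrib]
  apply Finset.sum_congr rfl
  intro k _
  rw [smul_smul, smul_smul, smul_smul, ← add_smul, ← sub_smul, ← add_smul]
  congr 1
  exact key k
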